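/- Suppose Φₓ, Φᵤ are strictly causal bounded linear operators satisfying (I − S₊A)Φₓ − S₊BΦᵤ = S₊, where A, B are bounded causal linear operators. Then the block lower-triangular matrix representation (Φₓ(i,j)) of Φₓ satisfies Φₓ(i, i−1) = I for all i ≥ 1, i.e., Φₓ has identity matrices on its first block subdiagonal. -/

import Mathlib

/-- The right shift operator `S₊` on `ℝⁿ`-valued sequences, as a linear map. -/
noncomputable def shiftR (n : ℕ) : (ℕ → (Fin n → ℝ)) →ₗ[ℝ] (ℕ → (Fin n → ℝ)) where
  toFun x := fun t => if t = 0 then 0 else x (t - 1)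
  map_add' x y := by funext t; by_cases h : t = 0 <;> simp [h]
  map_smul' c x := by funext t; by_cases h : t = 0 <;> simp [h]

/-- A linear operator on sequences is causal if `(Gx)ₜ` depends only on `x₀, …, xₜ`. -/
def CausalL {n m : ℕ} (G : (ℕ → (Fin n → ℝ)) →ₗ[ℝ] (ℕ → (Fin m → ℝ))) : Prop :=
  ∀ x y : ℕ → (Fin n → ℝ), ∀ t : ℕ, (∀ s ≤ t, x s = y s) → G x t = G y t

/-- A linear operator is strictly causal if `(Gx)ₜ` depends only on `x₀, …, x_{t−1}`. -/
def StrictlyCausalL {n m : ℕ} (G : (ℕ → (Fin n → ℝ)) →ₗ[ℝ] (ℕ → (Fin m → ℝ))) : Prop :=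
  ∀ x y : ℕ → (Fin n → ℝ), ∀ t : ℕ, (∀ s < t, x s = y s) → G x t = G y t

/-- If strictly causal `Φₓ, Φᵤ` satisfy `(I − S₊A)Φₓ − S₊BΦᵤ = S₊` with `A, B` causal, then
the block lower-triangular matrix representation of `Φₓ` has identity matrices on its first
block subdiagonal: `Φₓ(i, i−1) = I` for all `i ≥ 1`. -/
theorem stmt10 {n p : ℕ}
    (A : (ℕ → (Fin n → ℝ)) →ₗ[ℝ] (ℕ → (Fin n → ℝ)))
    (B : (ℕ → (Fin p → ℝ)) →ₗ[ℝ] (ℕ → (Fin n → ℝ)))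
    (Φx : (ℕ → (Fin n → ℝ)) →ₗ[ℝ] (ℕ → (Fin n → ℝ)))
    (Φu : (ℕ → (Fin n → ℝ)) →ₗ[ℝ] (ℕ → (Fin p → ℝ)))
    (hA : CausalL A) (hB : CausalL B)
    (hΦx : StrictlyCausalL Φx) (hΦu : StrictlyCausalL Φu)
    (hconstraint :
      (LinearMap.id - (shiftR n) ∘ₗ A) ∘ₗ Φx - (shiftR n) ∘ₗ B ∘ₗ Φu = shiftR n)
    (Φmat : ℕ → ℕ → Matrix (Fin n) (Fin n) ℝ)
    (hmat : ∀ (w : ℕ → (Fin n → ℝ)) (t : ℕ),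
      Φx w t = ∑ s ∈ Finset.range t, (Φmat t s).mulVec (w s)) :
    ∀ i : ℕ, 1 ≤ i → Φmat i (i - 1) = 1 := by
  intro i hi
  -- key: Φmat i (i-1) acts as identity on every vector
  have key : ∀ v : Fin n → ℝ, (Φmat i (i-1)).mulVec v = v := by
    intro v
    set w : ℕ → (Fin n → ℝ) := fun s => if s = i - 1 then v else 0 with hw
    -- Φx w s = 0 for s ≤ i - 1
    have hΦx0 : ∀ s, s ≤ i - 1 → Φx w s = 0 := by
      intro s hs
      have : Φx w s = Φx 0 s := by
        apply hΦx
        intro r hr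
        have : r ≠ i - 1 := by omega
        simp [hw, this]
      simpa using this
    have hΦu0 : ∀ s, s ≤ i - 1 → Φu w s = 0 := by
      intro s hs
      have : Φu w s = Φu 0 s := by
        apply hΦu
        intro r hr
        have : r ≠ i - 1 := by omega
        simp [hw, this]
      simpa using this
    have hAeq : A (Φx w) (i-1) = 0 := by
      have : A (Φx w) (i-1) = A 0 (i-1) := by
        apply hA
        intro s hs
        simp [hΦx0 s hs]
      simpa using this
    have hBeq : B (Φu w) (i-1) = 0 := by
      have : B (Φu w) (i-1) = B 0 (i-1) := by
        apply hB
        intro s hs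
        simp [hΦu0 s hs]
      simpa using this
    have hc := congrFun (congrArg (fun (F : (ℕ → (Fin n → ℝ)) →ₗ[ℝ] (ℕ → (Fin n → ℝ))) => F w i) hconstraint)
    simp only [LinearMap.sub_apply, LinearMap.comp_apply, LinearMap.id_apply] at hc
    have hine : i ≠ 0 := by omega
    have hSw : shiftR n w i = v := by simp [shiftR, hine, hw]
    have hSA : shiftR n (A (Φx w)) i = 0 := by simp [shiftR, hine, hAeq]
    have hSB : shiftR n (B (Φu w)) i = 0 := by simp [shiftR, hine, hBeq]
    have hΦxi : Φx w i = v := by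
      have := hc
      rw [Pi.sub_apply, Pi.sub_apply, hSA, hSB, hSw] at this
      funext a; simpa using this a
    have hsum := hmat w i
    rw [hΦxi] at hsum
    have : ∑ s ∈ Finset.range i, (Φmat i s).mulVec (w s)
        = (Φmat i (i-1)).mulVec v := by
      rw [Finset.sum_eq_single (i-1)]
      · simp [hw]
      · intro b hb hbne
        simp [hw, hbne, Matrix.mulVec_zero]
      · intro h
        exact absurd (Finset.mem_range.mpr (by omega)) h
    rw [this] at hsum
    exact hsum.symm
  ext a b
  have := congrFun (key (Pi.single b 1)) a
  rw [Matrix.mulVec_single] at this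
  simp only [Pi.smul_apply, op_smul_eq_mul, Matrix.col_apply, mul_one] at this
  rw [this]
  by_cases hab : a = b <;> simp [Matrix.one_apply, hab, Pi.single_apply, eq_comm]
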